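/- arXiv:2603.17129 — 3 statements merged into one kernel-verified Lean document; each statement's English description precedes it below -/
import Mathlib

section
/- Let m and n be finite index types, S ⊆ m × n a set of positions, and A : Matrix m n ℝ a real matrix whose support is contained in S (i.e., A i j = 0 whenever (i,j) ∉ S). Then rank(A) ≤ ν(S), where ν(S) is the maximum cardinality of a matching in S, i.e., the largest cardinality of a subset M ⊆ S such that no two elements of M share a first coordinate and no two share a second coordinate. -/
open Matrix

/-- From a matrix of rank `r` over a field one can select `r` rows that are
linearly independent. -/
lemma exists_linearIndependent_rows {m n : Type*} [Fintype m] [Fintype n]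
    {r : ℕ} (A : Matrix m n ℝ) (h : A.rank = r) :
    ∃ f : Fin r → m, Function.Injective f ∧ LinearIndependent ℝ (fun i => A (f i)) := by
  classical
  obtain ⟨t, hts, hspan, hli⟩ := exists_linearIndependent ℝ (Set.range A)
  have htfin : t.Finite := (Set.finite_range A).subset hts
  haveI : Fintype t := htfin.fintype
  have hcard : Fintype.card t = r := by
    have := finrank_span_set_eq_card hli
    have h' : A.rank = Module.finrank ℝ (Submodule.span ℝ (Set.range A)) :=
      Matrix.rank_eq_finrank_span_row A
    rw [hspan, ← h', h] at this
    simpa [Set.toFinset_card] using this.symm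
  obtain ⟨e⟩ : Nonempty (Fin r ≃ t) :=
    ⟨(Fintype.equivFinOfCardEq hcard).symm⟩
  have hchoice : ∀ v : t, ∃ i : m, A i = (v : n → ℝ) := fun v => hts v.2
  choose g hg using hchoice
  refine ⟨fun i => g (e i), ?_, ?_⟩
  · intro i j hij
    have h2 : (e i : n → ℝ) = (e j : n → ℝ) := by
      rw [← hg (e i), ← hg (e j)]; exact congrArg A hij
    exact e.injective (Subtype.ext h2)
  · have : (fun i => A (g (e i))) = (fun i => ((e i : t) : n → ℝ)) := by
      funext i; exact hg (e i)
    rw [this]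
    exact hli.comp e e.injective

/-- The matching number of a pattern `S ⊆ m × n`: the largest cardinality of a
subset `M ⊆ S` in which no two elements share a first coordinate and no two
share a second coordinate. -/
noncomputable def matchingNumber {m n : Type*} (S : Set (m × n)) : ℕ :=
  sSup {k : ℕ | ∃ M : Finset (m × n), ↑M ⊆ S ∧
    (∀ p ∈ M, ∀ q ∈ M, p ≠ q → p.1 ≠ q.1 ∧ p.2 ≠ q.2) ∧ M.card = k}

/-- A matrix supported on a pattern `S` has rank at most the
matching number of `S`. -/
theorem rank_le_matchingNumber
    {m n : Type*} [Fintype m] [Fintype n] [DecidableEq m] [DecidableEq n]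
    (S : Set (m × n)) (A : Matrix m n ℝ)
    (hA : ∀ i j, (i, j) ∉ S → A i j = 0) :
    A.rank ≤ matchingNumber S := by
  classical
  set r := A.rank with hr
  -- select r linearly independent rows
  obtain ⟨f, hfinj, hfli⟩ := exists_linearIndependent_rows A rfl
  set A1 : Matrix (Fin r) n ℝ := A.submatrix f id with hA1
  have hA1rank : A1.rank = r := by
    have : A1.rank = Fintype.card (Fin r) := LinearIndependent.rank_matrix hfli
    simpa using this
  have hBrank : (A1ᵀ).rank = r := by rw [Matrix.rank_transpose]; exact hA1rank
  obtain ⟨g, hginj, hgli⟩ := exists_linearIndependent_rows A1ᵀ hBrank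
  -- the square submatrix C is invertible
  set C : Matrix (Fin r) (Fin r) ℝ := fun i j => A (f j) (g i) with hC
  have hCli : LinearIndependent ℝ (fun i => C i) := hgli
  have hCunit : IsUnit C := Matrix.linearIndependent_rows_iff_isUnit.mp hCli
  have hCdet : C.det ≠ 0 := by
    intro hdet
    exact (Matrix.isUnit_iff_isUnit_det C).mp hCunit |>.ne_zero hdet
  -- extract a nonzero Leibniz term
  have hdet := Matrix.det_apply C
  have hterm : ∃ σ : Equiv.Perm (Fin r),
      (Equiv.Perm.sign σ • ∏ i, C (σ i) i) ≠ 0 := by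
    by_contra hcon
    push_neg at hcon
    apply hCdet
    rw [hdet]
    exact Finset.sum_eq_zero fun σ _ => hcon σ
  obtain ⟨σ, hσ⟩ := hterm
  have hprod : (∏ i, C (σ i) i) ≠ 0 := by
    intro h0; apply hσ; rw [h0, smul_zero]
  have hentry : ∀ i : Fin r, A (f i) (g (σ i)) ≠ 0 := by
    intro i
    have := Finset.prod_ne_zero_iff.mp hprod i (Finset.mem_univ i)
    simpa [hC] using this
  -- build the matching
  set M : Finset (m × n) :=
    Finset.image (fun i : Fin r => (f i, g (σ i))) Finset.univ with hM
  have hMS : ↑M ⊆ S := by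
    intro p hp
    simp only [hM, Finset.coe_image, Set.mem_image] at hp
    obtain ⟨i, _, rfl⟩ := hp
    by_contra hpS
    exact hentry i (hA _ _ hpS)
  have hMmatch : ∀ p ∈ M, ∀ q ∈ M, p ≠ q → p.1 ≠ q.1 ∧ p.2 ≠ q.2 := by
    intro p hp q hq hpq
    simp only [hM, Finset.mem_image, Finset.mem_univ, true_and] at hp hq
    obtain ⟨i, rfl⟩ := hp
    obtain ⟨j, rfl⟩ := hq
    have hij : i ≠ j := by rintro rfl; exact hpq rfl
    exact ⟨fun h => hij (hfinj h), fun h => hij (σ.injective (hginj h))⟩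
  have hMcard : M.card = r := by
    rw [hM, Finset.card_image_of_injective _ (fun i j hij => hfinj (congrArg Prod.fst hij))]
    simp
    rfl
  have hmem : r ∈ {k : ℕ | ∃ M : Finset (m × n), ↑M ⊆ S ∧
      (∀ p ∈ M, ∀ q ∈ M, p ≠ q → p.1 ≠ q.1 ∧ p.2 ≠ q.2) ∧ M.card = k} :=
    ⟨M, hMS, hMmatch, hMcard⟩
  have hbdd : BddAbove {k : ℕ | ∃ M : Finset (m × n), ↑M ⊆ S ∧
      (∀ p ∈ M, ∀ q ∈ M, p ≠ q → p.1 ≠ q.1 ∧ p.2 ≠ q.2) ∧ M.card = k} := by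
    refine ⟨Fintype.card (m × n), ?_⟩
    rintro k ⟨M, -, -, rfl⟩
    exact M.card_le_univ.trans_eq (by simp)
  exact le_csSup hbdd hmem
end

section
/- Let J and G be matrices over the multivariate real polynomial ring in n variables, with sizes so that A := J·G is defined, and for x ∈ ℝⁿ let J(x), A(x) denote entrywise evaluation at x. Suppose there exists a point x₀ ∈ ℝⁿ with rank(A(x₀)) = r, and suppose rank(J(x)) ≤ r for all x ∈ ℝⁿ. Then for almost all x ∈ ℝⁿ (all x outside a Lebesgue-null set), rank(A(x)) = rank(J(x)) = r; in particular, Im(A(x)) = Im(J(x)) for almost all x, i.e., the system is generically admissible. -/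
open MeasureTheory Matrix

/-- The zero set of a nonzero multivariate polynomial over `ℝ` is Lebesgue-null. -/
lemma mvpoly_zero_set_null : ∀ {n : ℕ} (q : MvPolynomial (Fin n) ℝ), q ≠ 0 →
    volume {x : Fin n → ℝ | MvPolynomial.eval x q = 0} = 0 := by
  intro n
  induction n with
  | zero =>
    intro q hq
    have hempty : {x : Fin 0 → ℝ | MvPolynomial.eval x q = 0} = ∅ := by
      ext x
      simp only [Set.mem_setOf_eq, Set.mem_empty_iff_false, iff_false]
      intro h
      apply hq
      rw [MvPolynomial.eq_C_of_isEmpty q]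
      rw [MvPolynomial.eq_C_of_isEmpty q, MvPolynomial.eval_C] at h
      rw [h, map_zero]
    rw [hempty, measure_empty]
  | succ n ih =>
    intro q hq
    set Q : Polynomial (MvPolynomial (Fin n) ℝ) := MvPolynomial.finSuccEquiv ℝ n q with hQdef
    have hQ0 : Q ≠ 0 := by
      intro h
      apply hq
      have := congrArg (MvPolynomial.finSuccEquiv ℝ n).symm (hQdef ▸ h)
      simpa using this
    set c : MvPolynomial (Fin n) ℝ := Q.leadingCoeff with hcdef
    have hc0 : c ≠ 0 := Polynomial.leadingCoeff_ne_zero.mpr hQ0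
    set S : Set (Fin (n + 1) → ℝ) := {x | MvPolynomial.eval x q = 0} with hSdef
    have hSmeas : MeasurableSet S :=
      (isClosed_eq (MvPolynomial.continuous_eval q) continuous_const).measurableSet
    set e := MeasurableEquiv.piFinSuccAbove (fun _ : Fin (n + 1) => ℝ) 0 with hedef
    have hmp : MeasurePreserving e volume (volume.prod volume) :=
      volume_preserving_piFinSuccAbove _ 0
    have hT : volume S = (volume.prod volume) (e.symm ⁻¹' S) :=
      ((hmp.symm e).measure_preimage hSmeas.nullMeasurableSet).symm
    set T : Set (ℝ × (Fin n → ℝ)) := e.symm ⁻¹' S with hTdef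
    have hTmeas : MeasurableSet T := e.symm.measurable hSmeas
    -- swap coordinates
    set T' : Set ((Fin n → ℝ) × ℝ) := Prod.swap ⁻¹' T with hT'def
    have hT'meas : MeasurableSet T' := measurable_swap hTmeas
    have hswap : (volume.prod volume) T = (volume.prod volume) T' := by
      have h1 : Measure.map Prod.swap ((volume : Measure ℝ).prod (volume : Measure (Fin n → ℝ)))
          = (volume : Measure (Fin n → ℝ)).prod (volume : Measure ℝ) := Measure.prod_swap
      have h2 : T = Prod.swap ⁻¹' T' := by
        rw [hT'def]
        ext z
        simp [Prod.swap]
      rw [h2, ← h1, Measure.map_apply measurable_swap hT'meas]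
    rw [hT, hswap]
    -- Fubini: for a.e. s, the section in the last variable is finite
    rw [Measure.measure_prod_null hT'meas]
    have hae : ∀ᵐ s : Fin n → ℝ ∂volume, MvPolynomial.eval s c ≠ 0 := by
      rw [ae_iff]
      simpa using ih c hc0
    filter_upwards [hae] with s hs
    -- the section
    have hsec : Prod.mk s ⁻¹' T' = {y : ℝ | Polynomial.eval y (Q.map (MvPolynomial.eval s)) = 0} := by
      ext y
      have hy : e.symm (y, s) = Fin.cons y s := by
        have : e.symm (y, s) = Fin.insertNth 0 y s := rfl
        rw [this, Fin.insertNth_zero']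
      simp only [hT'def, hTdef, hSdef, Set.mem_preimage, Set.mem_setOf_eq, Prod.swap]
      rw [hy, MvPolynomial.eval_eq_eval_mv_eval' s y q]
    have hQs : Q.map (MvPolynomial.eval s) ≠ 0 := by
      intro h
      apply hs
      have h2 := congrArg (fun P => Polynomial.coeff P Q.natDegree) h
      simp only [Polynomial.coeff_map, Polynomial.coeff_zero] at h2
      rw [hcdef, ← Polynomial.coeff_natDegree]
      exact h2
    have hfin : (Prod.mk s ⁻¹' T').Finite := by
      rw [hsec]
      exact Polynomial.finite_setOf_isRoot hQs
    simpa using hfin.measure_zero volume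

/-- The rank of any submatrix is at most the rank of the matrix. -/
lemma rank_submatrix_le' {K : Type*} [Field K] {e p : Type*} [Fintype e] [Fintype p]
    {r : ℕ} (M : Matrix e p K) (f : Fin r → e) (g : Fin r → p) :
    (M.submatrix f g).rank ≤ M.rank := by
  classical
  have h2 : M.submatrix f id = ((1 : Matrix e e K).submatrix f (Equiv.refl e)) * M := by
    rw [Matrix.one_submatrix_mul]
    congr
  have h3 : M.submatrix f g =
      (M.submatrix f id) * ((1 : Matrix p p K).submatrix (Equiv.refl p) g) := by
    rw [Matrix.mul_submatrix_one]
    simp [Matrix.submatrix_submatrix]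
  calc (M.submatrix f g).rank
      ≤ (M.submatrix f id).rank := by rw [h3]; exact Matrix.rank_mul_le_left _ _
    _ ≤ M.rank := by rw [h2]; exact Matrix.rank_mul_le_right _ _

/-- From a family whose span has finrank `r`, extract `r` linearly independent members. -/
lemma exists_comp_linearIndependent {K V ι : Type*} [Field K] [AddCommGroup V] [Module K V]
    [Fintype ι] (v : ι → V) (r : ℕ)
    (h : Module.finrank K (Submodule.span K (Set.range v)) = r) :
    ∃ f : Fin r → ι, LinearIndependent K (v ∘ f) := by
  classical
  obtain ⟨t, hts, htspan, hti⟩ := exists_linearIndependent K (Set.range v)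
  have htfin : t.Finite := (Set.finite_range v).subset hts
  haveI := htfin.fintype
  have hcard : Fintype.card t = r := by
    have := linearIndependent_iff_card_eq_finrank_span.mp hti
    rw [this, Set.finrank, Subtype.range_coe, htspan, h]
  let eqv : Fin r ≃ t := (Fintype.equivFinOfCardEq hcard).symm
  have hchoice : ∀ y : t, ∃ i : ι, v i = (y : V) := fun y => hts y.2
  refine ⟨fun i => (hchoice (eqv i)).choose, ?_⟩
  have hvf : v ∘ (fun i => (hchoice (eqv i)).choose) = (Subtype.val : t → V) ∘ eqv := by
    funext i
    exact (hchoice (eqv i)).choose_spec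
  rw [hvf]
  exact hti.comp eqv eqv.injective

/-- A matrix of rank `r` has an invertible `r × r` submatrix. -/
lemma exists_submatrix_det_ne_zero {e p : Type*} [Fintype e] [Fintype p] {r : ℕ}
    (M : Matrix e p ℝ) (h : M.rank = r) :
    ∃ (f : Fin r → e) (g : Fin r → p), (M.submatrix f g).det ≠ 0 := by
  classical
  have h1 : Module.finrank ℝ (Submodule.span ℝ (Set.range M)) = r := by
    exact (Matrix.rank_eq_finrank_span_row M).symm.trans h
  obtain ⟨f, hf⟩ := exists_comp_linearIndependent M r h1
  set N : Matrix (Fin r) p ℝ := M.submatrix f id with hNdef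
  have hNrows : LinearIndependent ℝ (fun i => N i) := hf
  have hN : N.rank = r := by
    have := hNrows.rank_matrix
    simp only [Fintype.card_fin] at this
    exact this
  have h2 : Module.finrank ℝ (Submodule.span ℝ (Set.range Nᵀ)) = r := by
    exact (Matrix.rank_eq_finrank_span_cols N).symm.trans hN
  obtain ⟨g, hg⟩ := exists_comp_linearIndependent Nᵀ r h2
  refine ⟨f, g, ?_⟩
  have hcols : LinearIndependent ℝ (fun i => (M.submatrix f g)ᵀ i) := hg
  have hu : IsUnit (M.submatrix f g) := Matrix.linearIndependent_cols_iff_isUnit.mp hcols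
  have hdet : IsUnit (M.submatrix f g).det := (Matrix.isUnit_iff_isUnit_det _).mp hu
  exact hdet.ne_zero

/-- For polynomial matrices `J`, `G` with `A = J * G`, if the
rank of `A` equals `r` at some point `x₀` and `rank (J x) ≤ r` everywhere, then
almost everywhere `rank (A x) = rank (J x) = r` and `Im (A x) = Im (J x)`:
the system is generically admissible. -/
theorem generic_admissibility
    {n : ℕ} {e ν p : Type*}
    [Fintype e] [Fintype ν] [Fintype p] [DecidableEq ν] [DecidableEq p]
    (J : Matrix e ν (MvPolynomial (Fin n) ℝ))
    (G : Matrix ν p (MvPolynomial (Fin n) ℝ))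
    (A : Matrix e p (MvPolynomial (Fin n) ℝ)) (hA : A = J * G)
    (r : ℕ)
    (hx0 : ∃ x₀ : Fin n → ℝ, (A.map (MvPolynomial.eval x₀)).rank = r)
    (hJ : ∀ x : Fin n → ℝ, (J.map (MvPolynomial.eval x)).rank ≤ r) :
    ∀ᵐ x : Fin n → ℝ ∂volume,
      (A.map (MvPolynomial.eval x)).rank = r ∧
      (J.map (MvPolynomial.eval x)).rank = r ∧
      LinearMap.range (A.map (MvPolynomial.eval x)).mulVecLin =
        LinearMap.range (J.map (MvPolynomial.eval x)).mulVecLin := by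
  classical
  obtain ⟨x₀, hx₀⟩ := hx0
  obtain ⟨f, g, hdet⟩ := exists_submatrix_det_ne_zero (A.map (MvPolynomial.eval x₀)) hx₀
  set P : MvPolynomial (Fin n) ℝ := (A.submatrix f g).det with hPdef
  have hPx : ∀ x : Fin n → ℝ,
      MvPolynomial.eval x P = ((A.map (MvPolynomial.eval x)).submatrix f g).det := by
    intro x
    rw [hPdef, RingHom.map_det, RingHom.mapMatrix_apply, Matrix.submatrix_map]
  have hP0 : P ≠ 0 := by
    intro h
    apply hdet
    rw [← hPx x₀, h, map_zero]
  have hae : ∀ᵐ x : Fin n → ℝ ∂volume, MvPolynomial.eval x P ≠ 0 := by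
    rw [ae_iff]
    simpa using mvpoly_zero_set_null P hP0
  filter_upwards [hae] with x hx
  have hAx : A.map (MvPolynomial.eval x) =
      (J.map (MvPolynomial.eval x)) * (G.map (MvPolynomial.eval x)) := by
    rw [hA]
    exact Matrix.map_mul
  have hle1 : (A.map (MvPolynomial.eval x)).rank ≤ (J.map (MvPolynomial.eval x)).rank := by
    rw [hAx]; exact Matrix.rank_mul_le_left _ _
  have hge : r ≤ (A.map (MvPolynomial.eval x)).rank := by
    have hdet' : ((A.map (MvPolynomial.eval x)).submatrix f g).det ≠ 0 := by
      rw [← hPx]; exact hx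
    have hrsub : ((A.map (MvPolynomial.eval x)).submatrix f g).rank = r := by
      rw [Matrix.rank_of_isUnit _ ((Matrix.isUnit_iff_isUnit_det _).mpr
        (isUnit_iff_ne_zero.mpr hdet'))]
      simp
    calc r = ((A.map (MvPolynomial.eval x)).submatrix f g).rank := hrsub.symm
      _ ≤ (A.map (MvPolynomial.eval x)).rank := rank_submatrix_le' _ f g
  have hAr : (A.map (MvPolynomial.eval x)).rank = r := le_antisymm (hle1.trans (hJ x)) hge
  have hJr : (J.map (MvPolynomial.eval x)).rank = r := le_antisymm (hJ x) (hAr ▸ hle1)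
  refine ⟨hAr, hJr, ?_⟩
  have hle : LinearMap.range (A.map (MvPolynomial.eval x)).mulVecLin ≤
      LinearMap.range (J.map (MvPolynomial.eval x)).mulVecLin := by
    rw [hAx, Matrix.mulVecLin_mul]
    exact LinearMap.range_comp_le_range _ _
  refine Submodule.eq_of_le_of_finrank_le hle ?_
  have e1 : Module.finrank ℝ ↥(LinearMap.range (A.map (MvPolynomial.eval x)).mulVecLin)
      = (A.map (MvPolynomial.eval x)).rank := rfl
  have e2 : Module.finrank ℝ ↥(LinearMap.range (J.map (MvPolynomial.eval x)).mulVecLin)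
      = (J.map (MvPolynomial.eval x)).rank := rfl
  rw [e1, e2, hAr, hJr]
end

section
/- Let G be a connected simple graph on the vertex set Fin N (N ≥ 1), let L = lapMatrix ℝ G be its graph Laplacian over ℝ, and let y₀ : Fin N → ℝ be an initial condition. Then the solution y(t) = exp(−t·L)·y₀ of the diffusive dynamics ẏ = −L y converges, as t → ∞, to the consensus vector whose every entry equals the average (1/N)·Σⱼ y₀(j): Tendsto (fun t => (Matrix.exp ℝ ((−t) • L)).mulVec y₀) atTop (nhds (fun _ => (Σⱼ y₀ j) / N)). -/
open Filter Matrix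

/-- For a connected simple graph on `Fin N` with Laplacian `L`,
the solution `y(t) = exp (-t L) y₀` of the diffusive dynamics `ẏ = -L y`
converges, as `t → ∞`, to the consensus vector whose entries all equal the
average of the initial condition. -/
theorem laplacian_flow_tendsto_average
    {N : ℕ} (hN : 1 ≤ N) (G : SimpleGraph (Fin N)) [DecidableRel G.Adj]
    (hconn : G.Connected) (y₀ : Fin N → ℝ) :
    Tendsto
      (fun t : ℝ =>
        (NormedSpace.exp ((-t) • (G.lapMatrix ℝ))).mulVec y₀)
      atTop
      (nhds (fun _ : Fin N => (∑ j, y₀ j) / N)) := by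
  set L := G.lapMatrix ℝ with hLdef
  have hPSD : L.PosSemidef := G.posSemidef_lapMatrix ℝ
  have hL : L.IsHermitian := hPSD.1
  set μ : Fin N → ℝ := hL.eigenvalues with hμdef
  set U : Matrix (Fin N) (Fin N) ℝ := (hL.eigenvectorUnitary : Matrix (Fin N) (Fin N) ℝ)
    with hUdef
  have hUmem := (hL.eigenvectorUnitary).2
  have hU1 : star U * U = 1 := (Unitary.mem_iff.mp hUmem).1
  have hU2 : U * star U = 1 := (Unitary.mem_iff.mp hUmem).2
  have hUinv : U⁻¹ = star U := Matrix.inv_eq_right_inv hU2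
  have hUunit : IsUnit U := ⟨⟨U, star U, hU2, hU1⟩, rfl⟩
  have hspec : L = U * diagonal μ * star U := by
    have := hL.spectral_theorem
    simpa [RCLike.ofReal_real_eq_id] using this
  set Dinf : Matrix (Fin N) (Fin N) ℝ :=
    diagonal (fun i => if μ i = 0 then (1:ℝ) else 0) with hDinfdef
  set P : Matrix (Fin N) (Fin N) ℝ := U * Dinf * star U with hPdef
  -- exp formula
  have hexp : ∀ t : ℝ, NormedSpace.exp ((-t) • L)
      = U * diagonal (fun i => Real.exp (-t * μ i)) * star U := by
    intro t
    have h1 : (-t) • L = U * diagonal (fun i => -t * μ i) * U⁻¹ := by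
      rw [hUinv, hspec, ← smul_mul_assoc, ← mul_smul_comm, ← diagonal_smul]
      rfl
    rw [h1, Matrix.exp_conj U _ hUunit, Matrix.exp_diagonal, Pi.exp_def, hUinv]
    congr 1
    ext i
    rw [← Real.exp_eq_exp_ℝ]
  -- convergence of the matrices to P
  have hdlim : Tendsto (fun t : ℝ => fun i => Real.exp (-t * μ i)) atTop
      (nhds (fun i => if μ i = 0 then (1:ℝ) else 0)) := by
    rw [tendsto_pi_nhds]
    intro i
    by_cases h : μ i = 0
    · simp [h]
    · have hpos : 0 < μ i := lt_of_le_of_ne (hPSD.eigenvalues_nonneg i) (Ne.symm h)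
      simp only [if_neg h]
      have hbot : Tendsto (fun t : ℝ => -t * μ i) atTop atBot := by
        have h1 : Tendsto (fun t : ℝ => t * μ i) atTop atTop :=
          Tendsto.atTop_mul_const hpos tendsto_id
        have h2 := tendsto_neg_atTop_atBot.comp h1
        exact h2.congr (fun t => (neg_mul t (μ i)).symm)
      exact Real.tendsto_exp_atBot.comp hbot
  have hcont : Continuous (fun w : Fin N → ℝ => U * diagonal w * star U) :=
    (continuous_const.matrix_mul (continuous_id.matrix_diagonal)).matrix_mul continuous_const
  have hmatlim : Tendsto (fun t : ℝ => NormedSpace.exp ((-t) • L)) atTop (nhds P) := by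
    have := (hcont.tendsto _).comp hdlim
    simp only [Function.comp_def] at this
    refine Tendsto.congr (fun t => (hexp t).symm) this
  have hveclim : Tendsto (fun t : ℝ => (NormedSpace.exp ((-t) • L)).mulVec y₀) atTop
      (nhds (P *ᵥ y₀)) := by
    have hmv : Continuous (fun M : Matrix (Fin N) (Fin N) ℝ => M *ᵥ y₀) :=
      continuous_id.matrix_mulVec continuous_const
    exact (hmv.tendsto P).comp hmatlim
  -- now identify P *ᵥ y₀
  suffices hPy : P *ᵥ y₀ = (fun _ : Fin N => (∑ j, y₀ j) / N) by
    rwa [hPy] at hveclim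
  -- transpose symmetry of P
  have hPsymm : Pᵀ = P := by
    have hsU : star U = Uᵀ := by
      rw [Matrix.star_eq_conjTranspose, conjTranspose_eq_transpose_of_trivial]
    rw [hPdef, hsU, transpose_mul, transpose_mul, transpose_transpose, diagonal_transpose,
      mul_assoc]
  -- L * P = 0
  have hLP : L * P = 0 := by
    rw [hspec, hPdef]
    simp only [mul_assoc]
    rw [← mul_assoc (star U) U (Dinf * star U), hU1, one_mul, hDinfdef,
      ← mul_assoc (diagonal μ) _ (star U), diagonal_mul_diagonal]
    have h0 : (fun i => μ i * if μ i = 0 then (1:ℝ) else 0) = 0 := by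
      funext i; by_cases h : μ i = 0 <;> simp [h]
    have hdz : diagonal (0 : Fin N → ℝ) = 0 := by
      ext i j
      simp [diagonal_apply]
    rw [h0, hdz, zero_mul, mul_zero]
  -- P *ᵥ x is a constant vector
  have hker : ∀ x : Fin N → ℝ, ∀ i j, (P *ᵥ x) i = (P *ᵥ x) j := by
    intro x i j
    have h0 : L *ᵥ (P *ᵥ x) = 0 := by
      rw [mulVec_mulVec, hLP, zero_mulVec]
    have := (G.lapMatrix_mulVec_eq_zero_iff_forall_reachable (x := P *ᵥ x)).mp
      h0
    exact this i j (hconn.preconnected i j)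
  -- P *ᵥ ones = ones
  have hones : P *ᵥ (fun _ : Fin N => (1:ℝ)) = fun _ => 1 := by
    set w : Fin N → ℝ := star U *ᵥ (fun _ => (1:ℝ)) with hwdef
    have hL1 : L *ᵥ (fun _ : Fin N => (1:ℝ)) = 0 := G.lapMatrix_mulVec_const_eq_zero
    have hDw : diagonal μ *ᵥ w = 0 := by
      have : (star U * (U * diagonal μ * star U)) *ᵥ (fun _ : Fin N => (1:ℝ)) = 0 := by
        rw [← mulVec_mulVec, ← hspec, hL1, mulVec_zero]
      rw [← mul_assoc, ← mul_assoc, hU1, one_mul, ← mulVec_mulVec] at this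
      exact this
    have hDinfw : Dinf *ᵥ w = w := by
      funext i
      have hi : μ i * w i = 0 := by
        have := congrFun hDw i
        simpa [mulVec_diagonal] using this
      by_cases h : μ i = 0
      · simp [hDinfdef, mulVec_diagonal, h]
      · have : w i = 0 := by
          rcases mul_eq_zero.mp hi with h' | h'
          · exact absurd h' h
          · exact h'
        simp [hDinfdef, mulVec_diagonal, h, this]
    rw [hPdef, ← mulVec_mulVec, ← mulVec_mulVec, ← hwdef, hDinfw, hwdef, mulVec_mulVec, hU2,
      one_mulVec]
  -- sums
  have hsum : ∑ i, (P *ᵥ y₀) i = ∑ j, y₀ j := by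
    have h1 : ∑ i, (P *ᵥ y₀) i = (fun _ : Fin N => (1:ℝ)) ⬝ᵥ (P *ᵥ y₀) := by
      simp [dotProduct]
    rw [h1, dotProduct_mulVec, ← hPsymm, vecMul_transpose, hones]
    simp [dotProduct]
  funext x
  have hconst : ∑ i, (P *ᵥ y₀) i = N * (P *ᵥ y₀) x := by
    rw [Finset.sum_congr rfl (fun i _ => hker y₀ i x)]
    simp [Finset.sum_const, mul_comm]
  have hNne : (N : ℝ) ≠ 0 := Nat.cast_ne_zero.mpr (by omega)
  field_simp
  rw [← hsum, hconst, mul_comm]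
end
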